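/- Let H be a real Hilbert space, (Ω, Σ, ν) a σ-finite measure space, and φ : Ω → H a measurable map with ‖φ(x)‖_H ≤ C for all x ∈ Ω. Let p_0 and p be nonnegative probability density functions with respect to ν such that φ·p_0 and φ·p are Bochner ν-integrable, and set μ_0 = ∫ φ(x) p_0(x) ν(dx), μ = ∫ φ(x) p(x) ν(dx). Then ‖μ_0 − μ‖_H² ≤ 4 C² · ∫ (√(p_0(x)) − √(p(x)))² ν(dx); that is, the squared kernel-mean error is bounded by 4 C² times the squared Hellinger distance between p_0 and p. -/

import Mathlib

open MeasureTheory

/-- the squared kernel-mean error is bounded by `4 C²` times the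
squared Hellinger distance between the densities. -/
theorem kernel_mean_hellinger_bound
    {H : Type*} [NormedAddCommGroup H] [InnerProductSpace ℝ H] [CompleteSpace H]
    {Ω : Type*} [MeasurableSpace Ω] (ν : Measure Ω) [SigmaFinite ν]
    (φ : Ω → H) (hφmeas : StronglyMeasurable φ)
    (C : ℝ) (hC : ∀ x, ‖φ x‖ ≤ C)
    (p₀ p : Ω → ℝ)
    (hp₀pos : ∀ x, 0 ≤ p₀ x) (hppos : ∀ x, 0 ≤ p x)
    (hp₀int : ∫ x, p₀ x ∂ν = 1) (hpint : ∫ x, p x ∂ν = 1)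
    (hφp₀ : Integrable (fun x => p₀ x • φ x) ν)
    (hφp : Integrable (fun x => p x • φ x) ν) :
    ‖(∫ x, p₀ x • φ x ∂ν) - ∫ x, p x • φ x ∂ν‖ ^ 2 ≤
      4 * C ^ 2 * ∫ x, (Real.sqrt (p₀ x) - Real.sqrt (p x)) ^ 2 ∂ν := by
  -- the densities are integrable
  have hint₀ : Integrable p₀ ν := by
    by_contra h; rw [integral_undef h] at hp₀int; norm_num at hp₀int
  have hint : Integrable p ν := by
    by_contra h; rw [integral_undef h] at hpint; norm_num at hpint
  -- C is nonnegative
  have hΩ : Nonempty Ω := by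
    by_contra h
    haveI := not_nonempty_iff.mp h
    rw [ν.eq_zero_of_isEmpty, integral_zero_measure] at hp₀int
    norm_num at hp₀int
  have hC0 : 0 ≤ C := le_trans (norm_nonneg _) (hC hΩ.some)
  set f : Ω → ℝ := fun x => Real.sqrt (p₀ x) - Real.sqrt (p x) with hf_def
  set g : Ω → ℝ := fun x => Real.sqrt (p₀ x) + Real.sqrt (p x) with hg_def
  have hs₀ : AEStronglyMeasurable (fun x => Real.sqrt (p₀ x)) ν :=
    Real.continuous_sqrt.comp_aestronglyMeasurable hint₀.1
  have hs : AEStronglyMeasurable (fun x => Real.sqrt (p x)) ν :=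
    Real.continuous_sqrt.comp_aestronglyMeasurable hint.1
  have hf_meas : AEStronglyMeasurable f ν := hs₀.sub hs
  have hg_meas : AEStronglyMeasurable g ν := hs₀.add hs
  have hg_nonneg : ∀ x, 0 ≤ g x := fun x =>
    add_nonneg (Real.sqrt_nonneg _) (Real.sqrt_nonneg _)
  -- pointwise bounds on the squares
  have hf_sq_le : ∀ x, f x ^ 2 ≤ p₀ x + p x := by
    intro x
    have h1 : 0 ≤ 2 * Real.sqrt (p₀ x) * Real.sqrt (p x) := by positivity
    have h2 : Real.sqrt (p₀ x) ^ 2 = p₀ x := Real.sq_sqrt (hp₀pos x)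
    have h3 : Real.sqrt (p x) ^ 2 = p x := Real.sq_sqrt (hppos x)
    simp only [hf_def]; nlinarith
  have hg_sq_le : ∀ x, g x ^ 2 ≤ 2 * (p₀ x + p x) := by
    intro x
    have h1 : 2 * Real.sqrt (p₀ x) * Real.sqrt (p x) ≤
        Real.sqrt (p₀ x) ^ 2 + Real.sqrt (p x) ^ 2 := two_mul_le_add_sq _ _
    have h2 : Real.sqrt (p₀ x) ^ 2 = p₀ x := Real.sq_sqrt (hp₀pos x)
    have h3 : Real.sqrt (p x) ^ 2 = p x := Real.sq_sqrt (hppos x)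
    simp only [hg_def]; nlinarith
  -- integrability of the squares
  have hsum : Integrable (fun x => p₀ x + p x) ν := hint₀.add hint
  have h2sum : Integrable (fun x => 2 * (p₀ x + p x)) ν := hsum.const_mul 2
  have hf_sq_int : Integrable (fun x => f x ^ 2) ν := by
    refine hsum.mono (hf_meas.pow 2) (Filter.Eventually.of_forall fun x => ?_)
    show ‖f x ^ 2‖ ≤ ‖p₀ x + p x‖
    rw [Real.norm_of_nonneg (sq_nonneg _), Real.norm_of_nonneg
      (add_nonneg (hp₀pos x) (hppos x))]
    exact hf_sq_le x
  have hg_sq_int : Integrable (fun x => g x ^ 2) ν := by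
    refine h2sum.mono (hg_meas.pow 2) (Filter.Eventually.of_forall fun x => ?_)
    show ‖g x ^ 2‖ ≤ ‖2 * (p₀ x + p x)‖
    have h0 : (0:ℝ) ≤ 2 * (p₀ x + p x) := by
      have := hp₀pos x; have := hppos x; positivity
    rw [Real.norm_of_nonneg (sq_nonneg _), Real.norm_of_nonneg h0]
    exact hg_sq_le x
  have hf_mem : MemLp f 2 ν := (memLp_two_iff_integrable_sq hf_meas).mpr hf_sq_int
  have hg_mem : MemLp g 2 ν := (memLp_two_iff_integrable_sq hg_meas).mpr hg_sq_int
  have hconj : Real.HolderConjugate 2 2 := Real.holderConjugate_iff.mpr ⟨one_lt_two, by norm_num⟩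
  have h2e : ENNReal.ofReal (2 : ℝ) = 2 := by norm_num
  -- Cauchy–Schwarz
  have hCS : ∫ x, |f x| * g x ∂ν ≤
      (∫ x, |f x| ^ (2:ℝ) ∂ν) ^ ((1:ℝ)/2) * (∫ x, g x ^ (2:ℝ) ∂ν) ^ ((1:ℝ)/2) := by
    refine integral_mul_le_Lp_mul_Lq_of_nonneg hconj
      (Filter.Eventually.of_forall fun x => abs_nonneg _)
      (Filter.Eventually.of_forall hg_nonneg) ?_ ?_
    · rw [h2e]; exact hf_mem.abs
    · rw [h2e]; exact hg_mem
  -- translate the rpow's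
  have hrpow : ∀ y : ℝ, y ^ (2:ℝ) = y ^ 2 := fun y => by
    rw [← Real.rpow_natCast y 2]; norm_num
  have hrw₁ : ∫ x, |f x| ^ (2:ℝ) ∂ν = ∫ x, f x ^ 2 ∂ν := by
    refine integral_congr_ae (Filter.Eventually.of_forall fun x => ?_)
    show |f x| ^ (2:ℝ) = f x ^ 2
    rw [hrpow, sq_abs]
  have hrw₂ : ∫ x, g x ^ (2:ℝ) ∂ν = ∫ x, g x ^ 2 ∂ν := by
    refine integral_congr_ae (Filter.Eventually.of_forall fun x => ?_)
    show g x ^ (2:ℝ) = g x ^ 2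
    rw [hrpow]
  rw [hrw₁, hrw₂] at hCS
  set A : ℝ := ∫ x, f x ^ 2 ∂ν with hA_def
  have hA_nonneg : 0 ≤ A := integral_nonneg fun x => sq_nonneg _
  -- bound on ∫ g²
  have hg_int_le : ∫ x, g x ^ 2 ∂ν ≤ 4 := by
    have : ∫ x, g x ^ 2 ∂ν ≤ ∫ x, 2 * (p₀ x + p x) ∂ν :=
      integral_mono hg_sq_int ((hint₀.add hint).const_mul 2) hg_sq_le
    rw [integral_const_mul, integral_add hint₀ hint, hp₀int, hpint] at this
    linarith
  have hg2_nonneg : (0:ℝ) ≤ ∫ x, g x ^ 2 ∂ν := integral_nonneg fun x => sq_nonneg _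
  have hsqrt_g : (∫ x, g x ^ 2 ∂ν) ^ ((1:ℝ)/2) ≤ 2 := by
    have h4 : ((4:ℝ)) ^ ((1:ℝ)/2) = 2 := by
      rw [show ((4:ℝ)) = 2 ^ (2:ℕ) by norm_num, ← Real.rpow_natCast 2 2,
        ← Real.rpow_mul (by norm_num)]
      norm_num
    calc (∫ x, g x ^ 2 ∂ν) ^ ((1:ℝ)/2) ≤ (4:ℝ) ^ ((1:ℝ)/2) :=
          Real.rpow_le_rpow hg2_nonneg hg_int_le (by norm_num)
      _ = 2 := h4
  -- pointwise identity |f|·g = |p₀ − p|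
  have hfg : ∀ x, |f x| * g x = |p₀ x - p x| := by
    intro x
    have h : f x * g x = p₀ x - p x := by
      simp only [hf_def, hg_def]
      have h2 : Real.sqrt (p₀ x) ^ 2 = p₀ x := Real.sq_sqrt (hp₀pos x)
      have h3 : Real.sqrt (p x) ^ 2 = p x := Real.sq_sqrt (hppos x)
      ring_nf
      nlinarith
    rw [← h, abs_mul, abs_of_nonneg (hg_nonneg x)]
  -- bound the norm of the difference of means
  have hdiff : Integrable (fun x => p₀ x - p x) ν := hint₀.sub hint
  have hdabs : Integrable (fun x => |p₀ x - p x|) ν := hdiff.abs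
  have hintC : Integrable (fun x => C * (|f x| * g x)) ν := by
    refine (hdabs.const_mul C).congr (Filter.Eventually.of_forall fun x => ?_)
    show C * |p₀ x - p x| = C * (|f x| * g x)
    rw [hfg x]
  have hnorm : ‖(∫ x, p₀ x • φ x ∂ν) - ∫ x, p x • φ x ∂ν‖ ≤ C * ∫ x, |f x| * g x ∂ν := by
    rw [← integral_sub hφp₀ hφp]
    calc ‖∫ x, (p₀ x • φ x - p x • φ x) ∂ν‖
        ≤ ∫ x, ‖p₀ x • φ x - p x • φ x‖ ∂ν := norm_integral_le_integral_norm _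
      _ ≤ ∫ x, C * (|f x| * g x) ∂ν := by
          refine integral_mono_of_nonneg
            (Filter.Eventually.of_forall fun x => norm_nonneg _) hintC
            (Filter.Eventually.of_forall fun x => ?_)
          show ‖p₀ x • φ x - p x • φ x‖ ≤ C * (|f x| * g x)
          rw [hfg x, ← sub_smul, norm_smul, Real.norm_eq_abs]
          calc |p₀ x - p x| * ‖φ x‖ ≤ |p₀ x - p x| * C :=
                mul_le_mul_of_nonneg_left (hC x) (abs_nonneg _)
            _ = C * |p₀ x - p x| := mul_comm _ _
      _ = C * ∫ x, |f x| * g x ∂ν := integral_const_mul _ _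
  -- combine
  have hchain : ‖(∫ x, p₀ x • φ x ∂ν) - ∫ x, p x • φ x ∂ν‖ ≤ C * (2 * A ^ ((1:ℝ)/2)) := by
    refine hnorm.trans ?_
    refine mul_le_mul_of_nonneg_left ?_ hC0
    calc ∫ x, |f x| * g x ∂ν
        ≤ A ^ ((1:ℝ)/2) * (∫ x, g x ^ 2 ∂ν) ^ ((1:ℝ)/2) := hCS
      _ ≤ A ^ ((1:ℝ)/2) * 2 :=
          mul_le_mul_of_nonneg_left hsqrt_g (Real.rpow_nonneg hA_nonneg _)
      _ = 2 * A ^ ((1:ℝ)/2) := mul_comm _ _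
  have hsq : (A ^ ((1:ℝ)/2)) ^ 2 = A := by
    rw [← Real.rpow_natCast (A ^ ((1:ℝ)/2)) 2, ← Real.rpow_mul hA_nonneg]
    norm_num
  calc ‖(∫ x, p₀ x • φ x ∂ν) - ∫ x, p x • φ x ∂ν‖ ^ 2
      ≤ (C * (2 * A ^ ((1:ℝ)/2))) ^ 2 := pow_le_pow_left₀ (norm_nonneg _) hchain 2
    _ = 4 * C ^ 2 * A := by rw [mul_pow, mul_pow, hsq]; ring
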